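/- Let f : 𝕊ⁿ → ℝ be L₀-Lipschitz with respect to the Frobenius norm, let μ > 0, and let f_μ(X) := E_{U∼𝔾ⁿ}[f(X + μU)] be the Gaussian approximation of f. Then |f_μ(X) − f(X)| ≤ μ · L₀ · sqrt((n² + n)/2) for every X ∈ 𝕊ⁿ. -/

import Mathlib

open MeasureTheory ProbabilityTheory Matrix

noncomputable section

instance matrixMeasurableSpace (n : ℕ) : MeasurableSpace (Matrix (Fin n) (Fin n) ℝ) :=
  inferInstanceAs (MeasurableSpace (Fin n → Fin n → ℝ))

/-- Auxiliary product of independent Gaussians: variance `1` at diagonal positions,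
variance `1/2` at off-diagonal positions. -/
def gaussAux (n : ℕ) : Measure (Fin n → Fin n → ℝ) :=
  Measure.pi fun i => Measure.pi fun j => gaussianReal 0 (if i = j then 1 else 2⁻¹)

/-- The Gaussian orthogonal ensemble `𝔾ⁿ`: the law of the random symmetric matrix whose
entry `(i,j)` with `i ≤ j` is the independent Gaussian `g i j` (so `U_ii ~ N(0,1)`,
`U_ij = U_ji ~ N(0,1/2)` for `i < j`). -/
def goe (n : ℕ) : Measure (Matrix (Fin n) (Fin n) ℝ) :=
  (gaussAux n).map fun g => Matrix.of fun i j => if i ≤ j then g i j else g j i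

/-- The Frobenius norm `‖M‖_F = sqrt (trace (Mᵀ * M))`. -/
def frob {n : ℕ} (M : Matrix (Fin n) (Fin n) ℝ) : ℝ :=
  Real.sqrt (Matrix.trace (Mᵀ * M))

open Real
open scoped NNReal ENNReal

lemma integral_sq_exp {b : ℝ} (hb : 0 < b) :
    ∫ x : ℝ, x ^ 2 * Real.exp (-b * x ^ 2) = b ^ (-(3:ℝ)/2) * Real.sqrt π / 2 := by
  have hrpow : ∀ x : ℝ, x ^ (2:ℝ) = x ^ (2:ℕ) := fun x => by
    rw [← Real.rpow_natCast x 2]; norm_num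
  have h0 : ∫ x : ℝ, x ^ 2 * Real.exp (-b * x ^ 2)
      = ∫ x : ℝ, |x| ^ 2 * Real.exp (-b * |x| ^ 2) := by simp [sq_abs]
  have h1 := integral_comp_abs (f := fun x : ℝ => x ^ 2 * Real.exp (-b * x ^ 2))
  have h2 := integral_rpow_mul_exp_neg_mul_rpow (p := 2) (q := 2) two_pos (by norm_num) hb
  simp_rw [hrpow] at h2
  have h3 : Real.Gamma ((2 + 1) / 2) = (1/2) * Real.sqrt π := by
    rw [show ((2:ℝ) + 1) / 2 = 1/2 + 1 by norm_num, Real.Gamma_add_one (by norm_num),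
      Real.Gamma_one_half_eq]
  rw [h0, h1, h2, h3]
  rw [show (-((2:ℝ) + 1) / 2) = -(3:ℝ)/2 by norm_num]
  ring

lemma integrable_sq_exp {b : ℝ} (hb : 0 < b) :
    Integrable (fun x : ℝ => x ^ 2 * Real.exp (-b * x ^ 2)) := by
  have := integrable_rpow_mul_exp_neg_mul_sq hb (s := 2) (by norm_num)
  have hrpow : ∀ x : ℝ, x ^ (2:ℝ) = x ^ (2:ℕ) := fun x => by
    rw [← Real.rpow_natCast x 2]; norm_num
  simpa [hrpow] using this

lemma pdf_eq (v : ℝ≥0) : ∀ x : ℝ, gaussianPDFReal 0 v x * x ^ 2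
    = (Real.sqrt (2 * π * v))⁻¹ * (x ^ 2 * Real.exp (-(2 * (v:ℝ))⁻¹ * x ^ 2)) := by
  intro x
  rw [gaussianPDFReal]
  rw [show -(x - 0) ^ 2 / (2 * (v:ℝ)) = -(2 * (v:ℝ))⁻¹ * x ^ 2 by ring]
  ring

lemma gaussianPDF_eq_coe (v : ℝ≥0) :
    gaussianPDF 0 v = fun x => ((Real.toNNReal (gaussianPDFReal 0 v x) : ℝ≥0) : ℝ≥0∞) := rfl

lemma integrable_sq_gaussianReal (v : ℝ≥0) :
    Integrable (fun x : ℝ => x ^ 2) (gaussianReal 0 v) := by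
  rcases eq_or_ne v 0 with rfl | hv
  · rw [gaussianReal_zero_var]
    have he : (fun x : ℝ => x ^ 2) =ᵐ[Measure.dirac (0:ℝ)] fun _ => (0:ℝ) := by
      rw [ae_dirac_eq]
      exact Filter.eventually_pure.mpr (by norm_num)
    exact (integrable_const (0:ℝ)).congr he.symm
  · have hv' : (0:ℝ) < v := by
      exact_mod_cast zero_lt_iff.mpr hv
    have hb : (0:ℝ) < (2 * (v:ℝ))⁻¹ := by positivity
    rw [gaussianReal_of_var_ne_zero 0 hv, gaussianPDF_eq_coe]
    rw [integrable_withDensity_iff_integrable_smul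
      ((measurable_gaussianPDFReal 0 v).real_toNNReal)]
    have : ∀ x : ℝ, (Real.toNNReal (gaussianPDFReal 0 v x)) • x ^ 2
        = (Real.sqrt (2 * π * v))⁻¹ * (x ^ 2 * Real.exp (-(2 * (v:ℝ))⁻¹ * x ^ 2)) := by
      intro x
      rw [NNReal.smul_def, smul_eq_mul,
        Real.coe_toNNReal _ (gaussianPDFReal_nonneg 0 v x), pdf_eq]
    simp_rw [this]
    exact (integrable_sq_exp hb).const_mul _

lemma integral_sq_gaussianReal (v : ℝ≥0) :
    ∫ x : ℝ, x ^ 2 ∂(gaussianReal 0 v) = v := by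
  rcases eq_or_ne v 0 with rfl | hv
  · rw [gaussianReal_zero_var, integral_dirac]
    norm_num
  · have hv' : (0:ℝ) < v := by exact_mod_cast zero_lt_iff.mpr hv
    have h2v : (0:ℝ) < 2 * v := by positivity
    have hb : (0:ℝ) < (2 * (v:ℝ))⁻¹ := by positivity
    rw [gaussianReal_of_var_ne_zero 0 hv, gaussianPDF_eq_coe]
    rw [integral_withDensity_eq_integral_smul
      ((measurable_gaussianPDFReal 0 v).real_toNNReal)]
    have : ∀ x : ℝ, (Real.toNNReal (gaussianPDFReal 0 v x)) • x ^ 2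
        = (Real.sqrt (2 * π * v))⁻¹ * (x ^ 2 * Real.exp (-(2 * (v:ℝ))⁻¹ * x ^ 2)) := by
      intro x
      rw [NNReal.smul_def, smul_eq_mul,
        Real.coe_toNNReal _ (gaussianPDFReal_nonneg 0 v x), pdf_eq]
    simp_rw [this, integral_const_mul, integral_sq_exp hb]
    have e1 : ((2 * (v:ℝ))⁻¹) ^ (-(3:ℝ)/2) = (2 * (v:ℝ)) ^ ((3:ℝ)/2) := by
      rw [Real.inv_rpow h2v.le, ← Real.rpow_neg h2v.le]
      norm_num
    have e2 : (2 * (v:ℝ)) ^ ((3:ℝ)/2) = (2 * (v:ℝ)) * Real.sqrt (2 * v) := by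
      rw [show (3:ℝ)/2 = 1 + 1/2 by norm_num, Real.rpow_add h2v, Real.rpow_one,
        ← Real.sqrt_eq_rpow]
    have e3 : Real.sqrt (2 * π * v) = Real.sqrt π * Real.sqrt (2 * v) := by
      rw [show 2 * π * (v:ℝ) = π * (2 * v) by ring, Real.sqrt_mul pi_pos.le]
    rw [e1, e2, e3]
    have hπ : Real.sqrt π ≠ 0 := by positivity
    have hs2v : Real.sqrt (2 * (v:ℝ)) ≠ 0 := by positivity
    field_simp

lemma pi_map_eval {ι : Type*} [Fintype ι] [DecidableEq ι] {α : ι → Type*}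
    [∀ i, MeasurableSpace (α i)] (μ : ∀ i, Measure (α i)) [∀ i, IsProbabilityMeasure (μ i)]
    (i : ι) : (Measure.pi μ).map (Function.eval i) = μ i := by
  ext s hs
  rw [Measure.map_apply (measurable_pi_apply i) hs, Set.eval_preimage, Measure.pi_pi]
  rw [Finset.prod_eq_single_of_mem i (Finset.mem_univ i)
    (fun j _ hj => by simp [Function.update_apply, hj, measure_univ])]
  simp

lemma gaussAux_map_coord {n : ℕ} (a b : Fin n) :
    (gaussAux n).map (fun g => g a b) = gaussianReal 0 (if a = b then 1 else 2⁻¹) := by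
  have h1 : (fun g : Fin n → Fin n → ℝ => g a b)
      = (Function.eval b : (Fin n → ℝ) → ℝ) ∘
        (Function.eval a : (Fin n → Fin n → ℝ) → (Fin n → ℝ)) := rfl
  rw [gaussAux, h1, ← Measure.map_map (measurable_pi_apply b) (measurable_pi_apply a),
    pi_map_eval, pi_map_eval]

lemma meas_coord {n : ℕ} (a b : Fin n) :
    Measurable (fun g : Fin n → Fin n → ℝ => g a b) :=
  (measurable_pi_apply b).comp (measurable_pi_apply a)

lemma integrable_sq_coord {n : ℕ} (a b : Fin n) :
    Integrable (fun g : Fin n → Fin n → ℝ => (g a b) ^ 2) (gaussAux n) := by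
  have h := (integrable_map_measure
    (f := fun g : Fin n → Fin n → ℝ => g a b) (g := fun x : ℝ => x ^ 2)
    (by rw [gaussAux_map_coord]
        exact (integrable_sq_gaussianReal _).aestronglyMeasurable)
    (meas_coord a b).aemeasurable).mp
  rw [gaussAux_map_coord] at h
  exact h (integrable_sq_gaussianReal _)

lemma integral_sq_coord {n : ℕ} (a b : Fin n) :
    ∫ g, (g a b) ^ 2 ∂(gaussAux n) = if a = b then (1:ℝ) else 2⁻¹ := by
  have := integral_map (φ := fun g : Fin n → Fin n → ℝ => g a b) (f := fun x : ℝ => x ^ 2)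
    (meas_coord a b).aemeasurable
    (by rw [gaussAux_map_coord]
        exact (integrable_sq_gaussianReal _).aestronglyMeasurable)
  rw [gaussAux_map_coord, integral_sq_gaussianReal] at this
  rw [← this]
  split_ifs <;> norm_num

instance (n : ℕ) : OpensMeasurableSpace (Matrix (Fin n) (Fin n) ℝ) :=
  inferInstanceAs (OpensMeasurableSpace (Fin n → Fin n → ℝ))

instance (n : ℕ) : IsProbabilityMeasure (gaussAux n) := by
  unfold gaussAux; infer_instance


lemma frob_eq {n : ℕ} (M : Matrix (Fin n) (Fin n) ℝ) :
    frob M = Real.sqrt (∑ i, ∑ j, (M i j) ^ 2) := by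
  unfold frob
  congr 1
  rw [Matrix.trace]
  simp only [Matrix.diag_apply, Matrix.mul_apply, Matrix.transpose_apply, sq]
  exact Finset.sum_comm

lemma frob_nonneg {n : ℕ} (M : Matrix (Fin n) (Fin n) ℝ) : 0 ≤ frob M :=
  Real.sqrt_nonneg _

lemma frob_sq {n : ℕ} (M : Matrix (Fin n) (Fin n) ℝ) :
    frob M ^ 2 = ∑ i, ∑ j, (M i j) ^ 2 := by
  rw [frob_eq, Real.sq_sqrt]
  positivity

lemma frob_smul {n : ℕ} (c : ℝ) (hc : 0 ≤ c) (M : Matrix (Fin n) (Fin n) ℝ) :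
    frob (c • M) = c * frob M := by
  rw [frob_eq, frob_eq]
  have : ∀ i j, ((c • M) i j) ^ 2 = c ^ 2 * (M i j) ^ 2 := by
    intro i j
    simp [Matrix.smul_apply, smul_eq_mul]
    ring
  simp_rw [this, ← Finset.mul_sum]
  rw [Real.sqrt_mul (by positivity), Real.sqrt_sq hc]

lemma frob_zero {n : ℕ} : frob (0 : Matrix (Fin n) (Fin n) ℝ) = 0 := by
  rw [frob_eq]
  simp

/-- If `f : 𝕊ⁿ → ℝ` is `L₀`-Lipschitz w.r.t. the Frobenius norm and
`μ > 0`, then the Gaussian approximation `f_μ(X) = E_{U∼𝔾ⁿ}[f(X + μU)]` satisfies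
`|f_μ(X) − f(X)| ≤ μ L₀ sqrt((n² + n)/2)` for every symmetric `X`. -/
theorem gaussian_approx_gap (n : ℕ) (f : Matrix (Fin n) (Fin n) ℝ → ℝ) (L₀ : ℝ)
    (hlip : ∀ X Y : Matrix (Fin n) (Fin n) ℝ, X.IsSymm → Y.IsSymm →
      |f X - f Y| ≤ L₀ * frob (X - Y))
    (μ : ℝ) (hμ : 0 < μ)
    (X : Matrix (Fin n) (Fin n) ℝ) (hX : X.IsSymm) :
    |(∫ U, f (X + μ • U) ∂(goe n)) - f X| ≤ μ * L₀ * Real.sqrt (((n : ℝ) ^ 2 + n) / 2) := by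
  classical
  -- the symmetrization map
  set sym : (Fin n → Fin n → ℝ) → Matrix (Fin n) (Fin n) ℝ :=
    fun g => Matrix.of fun i j => if i ≤ j then g i j else g j i with hsymdef
  set P := gaussAux n with hPdef
  haveI hPprob : IsProbabilityMeasure P := by rw [hPdef]; infer_instance
  have hsymm : ∀ g, (sym g).IsSymm := by
    intro g
    show (sym g)ᵀ = sym g
    ext i j
    simp only [Matrix.transpose_apply, hsymdef, Matrix.of_apply]
    rcases lt_trichotomy i j with h | h | h
    · simp [h.le, not_le.mpr h]
    · subst h; simp
    · simp [h.le, not_le.mpr h]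
  have hsym_meas : Measurable sym := by
    apply measurable_pi_lambda
    intro i
    apply measurable_pi_lambda
    intro j
    by_cases h : i ≤ j
    · simpa [hsymdef, h] using meas_coord i j
    · simpa [hsymdef, h] using meas_coord j i
  have hsymcont : Continuous sym := by
    apply continuous_pi
    intro i
    apply continuous_pi
    intro j
    by_cases h : i ≤ j
    · simpa [hsymdef, h] using (by fun_prop : Continuous fun g : Fin n → Fin n → ℝ => g i j)
    · simpa [hsymdef, h] using (by fun_prop : Continuous fun g : Fin n → Fin n → ℝ => g j i)
  have hgoe : goe n = P.map sym := rfl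
  -- frob is continuous
  have hfrob_cont : Continuous (frob : Matrix (Fin n) (Fin n) ℝ → ℝ) := by
    have : (frob : Matrix (Fin n) (Fin n) ℝ → ℝ)
        = fun M => Real.sqrt (∑ i, ∑ j, (M i j) ^ 2) := funext frob_eq
    rw [this]
    exact Real.continuous_sqrt.comp (continuous_finset_sum _ fun i _ =>
      continuous_finset_sum _ fun j _ =>
        ((continuous_apply j).comp (continuous_apply i : Continuous fun g : Fin n → Fin n → ℝ => g i)).pow 2)
  -- the symmetrized version of the integrand
  set F : Matrix (Fin n) (Fin n) ℝ → ℝ :=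
    fun U => f (X + μ • ((2:ℝ)⁻¹ • (U + Uᵀ))) with hFdef
  have hhalf : ∀ U : Matrix (Fin n) (Fin n) ℝ, ((2:ℝ)⁻¹ • (U + Uᵀ)).IsSymm := by
    intro U
    show _ = _
    rw [Matrix.transpose_smul, Matrix.transpose_add, Matrix.transpose_transpose, add_comm]
  have harg : ∀ U : Matrix (Fin n) (Fin n) ℝ, (X + μ • ((2:ℝ)⁻¹ • (U + Uᵀ))).IsSymm := by
    intro U
    show _ = _
    rw [Matrix.transpose_add, hX, Matrix.transpose_smul, hhalf U]
  have hhalf_eq : ∀ M : Matrix (Fin n) (Fin n) ℝ, Mᵀ = M → (2:ℝ)⁻¹ • (M + Mᵀ) = M := by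
    intro M hM
    rw [hM, ← two_smul ℝ M, smul_smul]
    norm_num
  have hKey : ∀ U W : Matrix (Fin n) (Fin n) ℝ,
      |F U - F W| ≤ L₀ * (μ * frob ((2:ℝ)⁻¹ • (U + Uᵀ) - (2:ℝ)⁻¹ • (W + Wᵀ))) := by
    intro U W
    have h := hlip _ _ (harg U) (harg W)
    have hd : (X + μ • ((2:ℝ)⁻¹ • (U + Uᵀ))) - (X + μ • ((2:ℝ)⁻¹ • (W + Wᵀ)))
        = μ • ((2:ℝ)⁻¹ • (U + Uᵀ) - (2:ℝ)⁻¹ • (W + Wᵀ)) := by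
      rw [add_sub_add_left_eq_sub, ← smul_sub]
    rw [hd, frob_smul μ hμ.le] at h
    simpa [hFdef, mul_assoc] using h
  have hFcont : Continuous F := by
    rw [continuous_iff_continuousAt]
    intro U₀
    have hBcont : Continuous (fun U : Matrix (Fin n) (Fin n) ℝ =>
        L₀ * (μ * frob ((2:ℝ)⁻¹ • (U + Uᵀ) - (2:ℝ)⁻¹ • (U₀ + U₀ᵀ)))) := by
      apply continuous_const.mul
      apply continuous_const.mul
      exact hfrob_cont.comp
        (by fun_prop)
    have hB0 : Filter.Tendsto (fun U : Matrix (Fin n) (Fin n) ℝ =>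
        L₀ * (μ * frob ((2:ℝ)⁻¹ • (U + Uᵀ) - (2:ℝ)⁻¹ • (U₀ + U₀ᵀ)))) (nhds U₀) (nhds 0) := by
      have := hBcont.tendsto U₀
      simpa [sub_self, frob_zero] using this
    refine tendsto_iff_dist_tendsto_zero.mpr ?_
    apply squeeze_zero (fun U => dist_nonneg)
      (fun U => by rw [Real.dist_eq]; exact hKey U U₀) hB0
  -- handle the degenerate case n = 0
  rcases Nat.eq_zero_or_pos n with hn | hn
  · subst hn
    have hU0 : ∀ U : Matrix (Fin 0) (Fin 0) ℝ, X + μ • U = X := by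
      intro U
      apply Matrix.ext
      intro i
      exact i.elim0
    have : IsProbabilityMeasure (goe 0) := by
      rw [hgoe]
      exact Measure.isProbabilityMeasure_map hsym_meas.aemeasurable
    simp only [hU0, integral_const, probReal_univ, one_smul]
    norm_num
  -- L₀ is nonnegative
  have hL₀ : 0 ≤ L₀ := by
    have h1 := hlip 1 0 Matrix.isSymm_one (Matrix.transpose_zero)
    have hfr : frob ((1 : Matrix (Fin n) (Fin n) ℝ) - 0) = Real.sqrt n := by
      rw [sub_zero, frob_eq]
      congr 1
      have : ∀ i j : Fin n, ((1 : Matrix (Fin n) (Fin n) ℝ) i j) ^ 2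
          = if i = j then (1:ℝ) else 0 := by
        intro i j
        by_cases h : i = j <;> simp [Matrix.one_apply, h]
      simp_rw [this, Finset.sum_ite_eq, Finset.mem_univ, if_true, Finset.sum_const,
        Finset.card_univ, Fintype.card_fin, nsmul_eq_mul, mul_one]
    rw [hfr] at h1
    have hsn : 0 < Real.sqrt n := Real.sqrt_pos.mpr (by exact_mod_cast hn)
    nlinarith [abs_nonneg (f 1 - f 0)]
  -- the Frobenius norm of the symmetrized Gaussian
  set h : (Fin n → Fin n → ℝ) → ℝ := fun g => frob (sym g) with hhdef
  have hh_cont : Continuous h := hfrob_cont.comp hsymcont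
  have hh_nonneg : ∀ g, 0 ≤ h g := fun g => frob_nonneg _
  have hsq_eq : ∀ g, h g ^ 2 = ∑ i, ∑ j, (if i ≤ j then g i j else g j i) ^ 2 := by
    intro g
    rw [hhdef, frob_sq]
    rfl
  have hint_sq : Integrable (fun g => h g ^ 2) P := by
    have : (fun g => h g ^ 2)
        = fun g => ∑ i : Fin n, ∑ j : Fin n, (if i ≤ j then g i j else g j i) ^ 2 :=
      funext hsq_eq
    rw [this]
    apply integrable_finset_sum
    intro i _
    apply integrable_finset_sum
    intro j _
    by_cases hij : i ≤ j
    · simpa [hij] using integrable_sq_coord (n := n) i j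
    · simpa [hij] using integrable_sq_coord (n := n) j i
  have hE : ∫ g, h g ^ 2 ∂P = (((n:ℝ) ^ 2 + n) / 2) := by
    have e1 : (fun g => h g ^ 2)
        = fun g => ∑ i : Fin n, ∑ j : Fin n, (if i ≤ j then g i j else g j i) ^ 2 :=
      funext hsq_eq
    rw [e1, integral_finset_sum _ (fun i _ => integrable_finset_sum _ (fun j _ => by
      by_cases hij : i ≤ j
      · simpa [hij] using integrable_sq_coord (n := n) i j
      · simpa [hij] using integrable_sq_coord (n := n) j i))]
    have e2 : ∀ i : Fin n, ∫ g, (∑ j : Fin n, (if i ≤ j then g i j else g j i) ^ 2) ∂P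
        = ∑ j : Fin n, ∫ g, ((if i ≤ j then g i j else g j i) ^ 2) ∂P := by
      intro i
      apply integral_finset_sum
      intro j _
      by_cases hij : i ≤ j
      · simpa [hij] using integrable_sq_coord (n := n) i j
      · simpa [hij] using integrable_sq_coord (n := n) j i
    simp_rw [e2]
    have e3 : ∀ i j : Fin n, ∫ g, ((if i ≤ j then g i j else g j i) ^ 2) ∂P
        = if i = j then (1:ℝ) else 2⁻¹ := by
      intro i j
      by_cases hij : i ≤ j
      · simpa [hij] using integral_sq_coord (n := n) i j
      · have hne : ¬ i = j := fun hc => hij (hc ▸ le_refl i)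
        have hne' : ¬ j = i := fun hc => hne hc.symm
        simp only [hij, if_false, hne]
        simpa [hne'] using integral_sq_coord (n := n) j i
    simp_rw [e3]
    have e4 : ∀ i j : Fin n, (if i = j then (1:ℝ) else 2⁻¹)
        = 2⁻¹ + (if i = j then 2⁻¹ else 0) := by
      intro i j
      split_ifs <;> norm_num
    simp_rw [e4, Finset.sum_add_distrib, Finset.sum_ite_eq, Finset.mem_univ, if_true,
      Finset.sum_const, Finset.card_univ, Fintype.card_fin, nsmul_eq_mul]
    ring
  have hmem : MemLp h 2 P :=
    (memLp_two_iff_integrable_sq hh_cont.aestronglyMeasurable).mpr hint_sq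
  have hint_h : Integrable h P := hmem.integrable one_le_two
  have hCS : ∫ g, h g ∂P ≤ Real.sqrt (((n:ℝ) ^ 2 + n) / 2) := by
    have hvar := variance_nonneg h P
    rw [variance_eq_sub hmem] at hvar
    have hv2 : (∫ g, h g ∂P) ^ 2 ≤ ((n:ℝ) ^ 2 + n) / 2 := by
      have : P[h ^ 2] = ∫ g, h g ^ 2 ∂P := by
        congr 1
      rw [this, hE] at hvar
      linarith
    calc ∫ g, h g ∂P = Real.sqrt ((∫ g, h g ∂P) ^ 2) :=
          (Real.sqrt_sq (integral_nonneg hh_nonneg)).symm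
      _ ≤ Real.sqrt (((n:ℝ) ^ 2 + n) / 2) := Real.sqrt_le_sqrt hv2
  -- pointwise bound
  have hpt : ∀ g, |f (X + μ • sym g) - f X| ≤ L₀ * (μ * h g) := by
    intro g
    have harg2 : (X + μ • sym g).IsSymm := by
      show _ = _
      rw [Matrix.transpose_add, hX, Matrix.transpose_smul, hsymm g]
    have h1 := hlip _ _ harg2 hX
    rw [add_sub_cancel_left, frob_smul μ hμ.le] at h1
    simpa [hhdef, mul_assoc] using h1
  -- continuity and integrability of the composite
  have hFsym : F ∘ sym = fun g => f (X + μ • sym g) := by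
    funext g
    show f (X + μ • ((2:ℝ)⁻¹ • (sym g + (sym g)ᵀ))) = f (X + μ • sym g)
    rw [hhalf_eq (sym g) (hsymm g)]
  have hψ_cont : Continuous (fun g => f (X + μ • sym g)) := by
    rw [← hFsym]
    exact hFcont.comp hsymcont
  have hψ_int : Integrable (fun g => f (X + μ • sym g)) P := by
    refine Integrable.mono' (g := fun g => |f X| + L₀ * (μ * h g))
      ((integrable_const _).add (((hint_h.const_mul μ).const_mul L₀)))
      hψ_cont.aestronglyMeasurable (ae_of_all _ fun g => ?_)
    rw [Real.norm_eq_abs]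
    calc |f (X + μ • sym g)| = |f X + (f (X + μ • sym g) - f X)| := by ring_nf
      _ ≤ |f X| + |f (X + μ • sym g) - f X| := abs_add_le _ _
      _ ≤ |f X| + L₀ * (μ * h g) := add_le_add_right (hpt g) _
  -- almost-everywhere identification over the GOE
  have hS_meas : MeasurableSet {U : Matrix (Fin n) (Fin n) ℝ | ∀ i j : Fin n, U j i = U i j} := by
    have : {U : Matrix (Fin n) (Fin n) ℝ | ∀ i j : Fin n, U j i = U i j}
        = ⋂ (i : Fin n) (j : Fin n), {U : Matrix (Fin n) (Fin n) ℝ | U j i = U i j} := by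
      ext U
      simp [Set.mem_iInter]
    rw [this]
    exact MeasurableSet.iInter fun i => MeasurableSet.iInter fun j =>
      measurableSet_eq_fun (meas_coord j i) (meas_coord i j)
  have hcompl : goe n {U : Matrix (Fin n) (Fin n) ℝ | ∀ i j : Fin n, U j i = U i j}ᶜ = 0 := by
    rw [hgoe, Measure.map_apply hsym_meas hS_meas.compl]
    have : sym ⁻¹' {U : Matrix (Fin n) (Fin n) ℝ | ∀ i j : Fin n, U j i = U i j}ᶜ = ∅ := by
      rw [Set.eq_empty_iff_forall_notMem]
      intro g hg
      exact hg fun i j => congrFun (congrFun (hsymm g) i) j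
    rw [this]
    simp
  have hae : ∀ᵐ U ∂(goe n), U ∈ {U : Matrix (Fin n) (Fin n) ℝ | ∀ i j : Fin n, U j i = U i j} := by
    rw [MeasureTheory.ae_iff]
    exact hcompl
  have haeeq : (fun U => f (X + μ • U)) =ᵐ[goe n] F := by
    refine hae.mono fun U hU => ?_
    have hUt : Uᵀ = U := by
      ext i j
      exact hU i j
    show f (X + μ • U) = f (X + μ • ((2:ℝ)⁻¹ • (U + Uᵀ)))
    rw [hhalf_eq U hUt]
  have hgoe_aesm : AEStronglyMeasurable (fun U => f (X + μ • U)) (goe n) :=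
    ⟨F, hFcont.stronglyMeasurable, haeeq⟩
  have hmain : ∫ U, f (X + μ • U) ∂(goe n) = ∫ g, f (X + μ • sym g) ∂P := by
    rw [hgoe] at hgoe_aesm ⊢
    exact integral_map hsym_meas.aemeasurable hgoe_aesm
  rw [hmain]
  have hsub : ∫ g, f (X + μ • sym g) ∂P - f X = ∫ g, (f (X + μ • sym g) - f X) ∂P := by
    rw [integral_sub hψ_int (integrable_const _), integral_const, probReal_univ,
      one_smul]
  rw [hsub]
  calc |∫ g, (f (X + μ • sym g) - f X) ∂P|
      ≤ ∫ g, |f (X + μ • sym g) - f X| ∂P := by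
        simpa [Real.norm_eq_abs] using
          norm_integral_le_integral_norm (fun g => f (X + μ • sym g) - f X) (μ := P)
    _ ≤ ∫ g, L₀ * (μ * h g) ∂P :=
        integral_mono ((hψ_int.sub (integrable_const _)).abs)
          (((hint_h.const_mul μ).const_mul L₀)) (fun g => hpt g)
    _ = L₀ * (μ * ∫ g, h g ∂P) := by rw [integral_const_mul, integral_const_mul]
    _ ≤ L₀ * (μ * Real.sqrt (((n:ℝ) ^ 2 + n) / 2)) :=
        mul_le_mul_of_nonneg_left (mul_le_mul_of_nonneg_left hCS hμ.le) hL₀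
    _ = μ * L₀ * Real.sqrt (((n:ℝ) ^ 2 + n) / 2) := by ring
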